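/- A Boolean self-join-free conjunctive query q is hierarchical if and only if one of the following holds: (1) q consists of a single atom; (2) q has k ≥ 2 connected components, all of which are hierarchical; or (3) q has a separator variable x (an existential variable occurring in every atom) and q − x is hierarchical. -/

import Mathlib

open scoped Classical

namespace PDB

noncomputable section

/-! ### Monotone DNF formulas over a finite variable set -/

/-- Probability that a monotone DNF formula (given by its finite set of implicants, each a
finite set of positive variables) is true, when each variable `x` is independently true with
probability `p x`. -/
def dnfProb {X : Type*} [Fintype X] (p : X → ℝ) (F : Finset (Finset X)) : ℝ :=
  ∑ ω : X → Bool,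
    (∏ x : X, if ω x = true then p x else 1 - p x) *
      (if ∃ T ∈ F, ∀ x ∈ T, ω x = true then 1 else 0)

/-- A prime implicant of a monotone DNF formula: a minimal implicant. -/
def IsPrimeImplicant {X : Type*} (F : Finset (Finset X)) (T : Finset X) : Prop :=
  T ∈ F ∧ ∀ S ∈ F, S ⊆ T → S = T

variable {A V dom : Type*}

/-! ### Self-join-free conjunctive queries: hierarchy and connectivity.
A self-join-free conjunctive query is given by its atoms: a family `atoms : A → Finset V`
assigning to each of the (pairwise distinct) relation symbols its finite set of variables;
`H` denotes the set of head variables (treated as constants); all other variables are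
existential.  A Boolean query has `H = ∅`. -/

/-- `at(x)`: the atoms among `S` that contain the variable `x`. -/
def atOf (atoms : A → Finset V) (S : Finset A) (x : V) : Finset A :=
  S.filter (fun i => x ∈ atoms i)

/-- The query consisting of the atoms `S` is hierarchical, with the variables in `H`
treated as constants (head variables): for any two existential variables, their atom sets
are comparable or disjoint. -/
def HierOn (atoms : A → Finset V) (S : Finset A) (H : Finset V) : Prop :=
  ∀ x : V, x ∉ H → ∀ y : V, y ∉ H →
    atOf atoms S x ⊆ atOf atoms S y ∨ atOf atoms S x ∩ atOf atoms S y = ∅ ∨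
      atOf atoms S y ⊆ atOf atoms S x

/-- A Boolean query (with all its atoms) is hierarchical. -/
def Hier [Fintype A] (atoms : A → Finset V) : Prop :=
  HierOn atoms Finset.univ ∅

/-- The set of atoms `S` is disconnected: it can be partitioned into two nonempty sets
sharing no variables. -/
def Disconn (atoms : A → Finset V) (S : Finset A) : Prop :=
  ∃ T : Finset A, T ⊆ S ∧ T.Nonempty ∧ (S \ T).Nonempty ∧
    ∀ i ∈ T, ∀ j ∈ S \ T, atoms i ∩ atoms j = ∅

/-- `T` is a connected component of the set of atoms `S`: a maximal connected subset. -/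
def IsComp (atoms : A → Finset V) (S T : Finset A) : Prop :=
  T ⊆ S ∧ T.Nonempty ∧ ¬ Disconn atoms T ∧
    ∀ U : Finset A, T ⊆ U → U ⊆ S → ¬ Disconn atoms U → U = T

/-- `xs` is a cut-set of the query with atoms `S`: a set of its variables whose removal
disconnects the query. -/
def IsCutSet (atoms : A → Finset V) (S : Finset A) (xs : Finset V) : Prop :=
  xs ⊆ S.sup atoms ∧ Disconn (fun i => atoms i \ xs) S

/-- a minimal cut-set (min-cut-set) -/
def MinCut (atoms : A → Finset V) (S : Finset A) (xs : Finset V) : Prop :=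
  IsCutSet atoms S xs ∧ ∀ ys : Finset V, ys ⊂ xs → ¬ IsCutSet atoms S ys

/-- the separator variables of a Boolean query: the variables occurring in every atom -/
def SepVars [Fintype A] [Fintype V] (atoms : A → Finset V) : Finset V :=
  Finset.univ.filter (fun x => ∀ i : A, x ∈ atoms i)

/-- the set of variables of a query -/
def varsOf [Fintype A] (atoms : A → Finset V) : Finset V :=
  Finset.univ.sup atoms

/-! ### Dissociations -/

/-- `Δ` is a dissociation of the query with atoms `atoms` and head variables `H`:
each atom receives extra existential variables of the query that it does not already
contain. -/
def IsDiss [Fintype A] (atoms : A → Finset V) (H : Finset V) (Δ : A → Finset V) : Prop :=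
  ∀ i : A, Δ i ⊆ (varsOf atoms \ H) \ atoms i

/-- the atoms of the dissociated query `q^Δ` -/
def dissAtoms (atoms Δ : A → Finset V) : A → Finset V := fun i => atoms i ∪ Δ i

/-- the partial dissociation order `Δ ≼ Δ'` -/
def dissLE (Δ Δ' : A → Finset V) : Prop := ∀ i : A, Δ i ⊆ Δ' i

/-- a safe dissociation: the dissociated query is hierarchical -/
def SafeDiss [Fintype A] (atoms : A → Finset V) (H : Finset V) (Δ : A → Finset V) : Prop :=
  IsDiss atoms H Δ ∧ HierOn (dissAtoms atoms Δ) Finset.univ H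

/-- a minimal safe dissociation: no smaller dissociation (in the order `≼`) is safe -/
def MinSafeDiss [Fintype A] (atoms : A → Finset V) (H : Finset V) (Δ : A → Finset V) : Prop :=
  SafeDiss atoms H Δ ∧
    ∀ Δ' : A → Finset V, SafeDiss atoms H Δ' → dissLE Δ' Δ → Δ' = Δ

/-! ### Tuple-independent probabilistic databases -/

/-- A tuple-independent probabilistic database for the query with atoms `atoms` over the
finite domain `dom`: each relation `i` is a finite set of tuples (functions from the
variables of the atom to the domain), each carrying a probability. -/
structure DB (atoms : A → Finset V) (dom : Type*) where
  tuples : ∀ i : A, Finset ({x // x ∈ atoms i} → dom)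
  prob : ∀ i : A, ({x // x ∈ atoms i} → dom) → ℝ

/-- all tuple probabilities lie in [0,1] -/
def DB.Valid {atoms : A → Finset V} (D : DB atoms dom) : Prop :=
  ∀ i : A, ∀ t ∈ D.tuples i, 0 ≤ D.prob i t ∧ D.prob i t ≤ 1

/-- the restriction of a valuation of all variables to the tuple format of atom `i` -/
def restrict (atoms : A → Finset V) (i : A) (ν : V → dom) : {x // x ∈ atoms i} → dom :=
  fun x => ν x.1

/-- restriction of a tuple to a smaller variable set -/
def restrictTup {xs ys : Finset V} (h : xs ⊆ ys) (t : {x // x ∈ ys} → dom) :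
    {x // x ∈ xs} → dom :=
  fun x => t ⟨x.1, h x.2⟩

/-- `P(q)`: the probability that the Boolean query with atoms `atoms` is true in a possible
world chosen by independently including each tuple `t` of `D` with probability `p(t)`. -/
def queryProb [Fintype A] (atoms : A → Finset V) (D : DB atoms dom) : ℝ :=
  ∑ W : ∀ i : A, {t // t ∈ D.tuples i} → Bool,
    (∏ i : A, ∏ t : {t // t ∈ D.tuples i},
        if W i t = true then D.prob i t.1 else 1 - D.prob i t.1) *
      (if ∃ ν : V → dom, ∀ i : A,
            ∃ h : restrict atoms i ν ∈ D.tuples i, W i ⟨restrict atoms i ν, h⟩ = true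
        then 1 else 0)

/-- The dissociated database `D^Δ`: relation `R_i^{ȳ_i}` contains one copy of each tuple
`t ∈ R_i` for every assignment of the added variables `ȳ_i` to domain values, with the same
probability as `t`. -/
def dissDB [Fintype dom] (atoms Δ : A → Finset V) (D : DB atoms dom) :
    DB (dissAtoms atoms Δ) dom where
  tuples i := Finset.univ.filter
    (fun t : {x // x ∈ dissAtoms atoms Δ i} → dom =>
      restrictTup (show atoms i ⊆ dissAtoms atoms Δ i from Finset.subset_union_left) t
        ∈ D.tuples i)
  prob i t :=
    D.prob i
      (restrictTup (show atoms i ⊆ dissAtoms atoms Δ i from Finset.subset_union_left) t)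

/-- `P(q^Δ)`: the probability of the dissociated query on the dissociated database. -/
def dissProb [Fintype A] [Fintype dom] (atoms Δ : A → Finset V) (D : DB atoms dom) : ℝ :=
  queryProb (dissAtoms atoms Δ) (dissDB atoms Δ D)

/-- The propagation score `ρ(q)`: the minimum of `P(q^Δ)` over all safe dissociations. -/
def propScore [Fintype A] [Fintype dom] (atoms : A → Finset V)
    (D : DB atoms dom) : ℝ :=
  sInf { r : ℝ | ∃ Δ : A → Finset V, SafeDiss atoms ∅ Δ ∧ r = dissProb atoms Δ D }

/-- the database with all tuple probabilities scaled by the factor `f` -/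
def scaleDB {atoms : A → Finset V} (D : DB atoms dom) (f : ℝ) : DB atoms dom where
  tuples := D.tuples
  prob i t := f * D.prob i t

/-- relation `i` is deterministic: all its tuples have probability 1 (otherwise it is
probabilistic) -/
def Deterministic {atoms : A → Finset V} (D : DB atoms dom) (i : A) : Prop :=
  ∀ t ∈ D.tuples i, D.prob i t = 1

/-- The lineage `F_{q,D}` of the Boolean query on `D`: the monotone DNF over the tuples of
`D` whose implicants correspond to the satisfying assignments of the query. -/
def lineage [Fintype A] [Fintype V] [Fintype dom] (atoms : A → Finset V)
    (D : DB atoms dom) :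
    Finset (Finset (Σ i : A, {x // x ∈ atoms i} → dom)) :=
  ((Finset.univ : Finset (V → dom)).filter
      (fun ν => ∀ i : A, restrict atoms i ν ∈ D.tuples i)).image
    (fun ν => Finset.univ.image
      (fun i : A => (⟨i, restrict atoms i ν⟩ : Σ i : A, {x // x ∈ atoms i} → dom)))

/-- The substitution `θ : D^Δ → D` mapping every tuple of a dissociated relation
`R_i^{ȳ_i}` to its projection onto the original variables of `R_i`. -/
def dissTupleMap (atoms Δ : A → Finset V) :
    (Σ i : A, {x // x ∈ dissAtoms atoms Δ i} → dom) →
      Σ i : A, {x // x ∈ atoms i} → dom :=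
  fun t =>
    ⟨t.1, restrictTup (show atoms t.1 ⊆ dissAtoms atoms Δ t.1 from Finset.subset_union_left)
      t.2⟩

/-! ### Functional dependencies -/

/-- `Determines Γ xs y`: the variable `y` is in the closure `xs⁺` of `xs` under the
functional dependencies `Γ`. -/
inductive Determines (Γ : Set (Finset V × V)) : Finset V → V → Prop
  | mem (xs : Finset V) (y : V) (h : y ∈ xs) : Determines Γ xs y
  | step (xs : Finset V) (fd : Finset V × V) (hfd : fd ∈ Γ)
      (hall : ∀ z ∈ fd.1, Determines Γ xs z) : Determines Γ xs fd.2

/-- The functional dependency `fd` is an FD on the attributes of relation `j` that holds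
in the database `D`. -/
def FDHolds (atoms : A → Finset V) (D : DB atoms dom) (j : A) (fd : Finset V × V) : Prop :=
  ∃ h1 : fd.1 ⊆ atoms j, ∃ h2 : fd.2 ∈ atoms j,
    ∀ t ∈ D.tuples j, ∀ t' ∈ D.tuples j,
      (∀ v : V, ∀ hv : v ∈ fd.1, t ⟨v, h1 hv⟩ = t' ⟨v, h1 hv⟩) →
        t ⟨fd.2, h2⟩ = t' ⟨fd.2, h2⟩

/-! ### Query plans -/

/-- Query plans: atoms, duplicate-eliminating projections (given by the retained head
variables), and k-ary natural joins. -/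
inductive Plan (A V : Type*) where
  | atom : A → Plan A V
  | proj : Finset V → Plan A V → Plan A V
  | join : List (Plan A V) → Plan A V

namespace Plan

/-- the head variables of a plan -/
def hvar (atoms : A → Finset V) : Plan A V → Finset V
  | .atom i => atoms i
  | .proj hv _ => hv
  | .join Ps => Ps.attach.foldr (fun P acc => hvar atoms P.1 ∪ acc) ∅
decreasing_by
  all_goals simp_wf
  all_goals try have := List.sizeOf_lt_of_mem P.2
  all_goals omega

/-- the multiset of atoms used by a plan -/
def atomsOf : Plan A V → Multiset A
  | .atom i => {i}
  | .proj _ P => atomsOf P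
  | .join Ps => Ps.attach.foldr (fun P acc => atomsOf P.1 + acc) 0
decreasing_by
  all_goals simp_wf
  all_goals try have := List.sizeOf_lt_of_mem P.2
  all_goals omega

def isProj : Plan A V → Prop
  | .proj _ _ => True
  | _ => False

def isJoin : Plan A V → Prop
  | .join _ => True
  | _ => False

/-- structural well-formedness: projections only retain available variables, joins are at
least binary, and joins and projections alternate -/
def WF (atoms : A → Finset V) : Plan A V → Prop
  | .atom _ => True
  | .proj hv P => hv ⊆ hvar atoms P ∧ ¬ isProj P ∧ WF atoms P
  | .join Ps => 2 ≤ Ps.length ∧ ∀ P ∈ Ps, ¬ isJoin P ∧ WF atoms P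
decreasing_by
  all_goals simp_wf
  all_goals try rename_i h; try have := List.sizeOf_lt_of_mem h
  all_goals omega

/-- a safe plan: at every join, all subplans have the same head variables -/
def Safe (atoms : A → Finset V) : Plan A V → Prop
  | .atom _ => True
  | .proj _ P => Safe atoms P
  | .join Ps => (∀ P ∈ Ps, Safe atoms P) ∧
      ∀ P ∈ Ps, ∀ Q ∈ Ps, hvar atoms P = hvar atoms Q
decreasing_by
  all_goals simp_wf
  all_goals try rename_i h; try have := List.sizeOf_lt_of_mem h
  all_goals omega

/-- `P` is a (well-formed) query plan for the query with atoms `atoms` and head variables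
`H`: it uses every atom exactly once and its output head variables are exactly `H`
(for a Boolean query, `H = ∅`, i.e. all existential variables are projected away). -/
def IsPlanFor [Fintype A] (atoms : A → Finset V) (H : Finset V) (P : Plan A V) : Prop :=
  WF atoms P ∧ atomsOf P = (Finset.univ : Finset A).val ∧ hvar atoms P = H

/-- the join variables: the union of the head variables of a list of subplans -/
def joinVars (atoms : A → Finset V) (Ps : List (Plan A V)) : Finset V :=
  (Ps.map (hvar atoms)).foldr (· ∪ ·) ∅

/-- Identification of plans up to join order, flattening of nested joins, and removal of
trivial (identity) projections. -/
inductive Equiv (atoms : A → Finset V) : Plan A V → Plan A V → Prop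
  | refl (P) : Equiv atoms P P
  | symm {P Q} : Equiv atoms P Q → Equiv atoms Q P
  | trans {P Q R} : Equiv atoms P Q → Equiv atoms Q R → Equiv atoms P R
  | projCongr (hv) {P Q} : Equiv atoms P Q → Equiv atoms (.proj hv P) (.proj hv Q)
  | joinCongr {Ps Qs} : List.Forall₂ (Equiv atoms) Ps Qs →
      Equiv atoms (.join Ps) (.join Qs)
  | joinPerm {Ps Qs} : Ps.Perm Qs → Equiv atoms (.join Ps) (.join Qs)
  | joinFlatten (Ps Qs Rs) :
      Equiv atoms (.join (Ps ++ .join Qs :: Rs)) (.join (Ps ++ Qs ++ Rs))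
  | projTriv {P} (hv) (h : hv = hvar atoms P) : Equiv atoms (.proj hv P) P

/-- The extensional score semantics of a plan evaluated on the database `D`: output tuples
are represented by total valuations `ν : V → dom` (only the values on the head variables
matter; duplicates are represented canonically by the default value `d₀` outside the head
variables).  Joins multiply scores, and duplicate-eliminating projections combine the
scores `s_1, …, s_n` of the tuples projecting to a common output tuple to
`1 - ∏ (1 - s_i)`. -/
def score [Fintype V] [Fintype dom] (atoms : A → Finset V) (D : DB atoms dom) (d₀ : dom) :
    Plan A V → (V → dom) → ℝ
  | .atom i, ν =>
      if restrict atoms i ν ∈ D.tuples i then D.prob i (restrict atoms i ν) else 0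
  | .proj hv P, ν =>
      1 - ∏ μ ∈ Finset.univ.filter (fun μ : V → dom =>
            (∀ v : V, v ∉ hvar atoms P → μ v = d₀) ∧ ∀ v ∈ hv, μ v = ν v),
          (1 - score atoms D d₀ P μ)
  | .join Ps, ν => (Ps.attach.map (fun P => score atoms D d₀ P.1 ν)).prod
decreasing_by
  all_goals simp_wf
  all_goals try have := List.sizeOf_lt_of_mem P.2
  all_goals omega

/-- the score of a Boolean plan -/
def bscore [Fintype V] [Fintype dom] [Inhabited dom] (atoms : A → Finset V)
    (D : DB atoms dom) (P : Plan A V) : ℝ :=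
  score atoms D default P (fun _ => default)

/-- Dropping the dissociated variables from a plan (for a dissociated query) to obtain the
corresponding plan `P^Δ` for the original query: every projection list is restricted to
the variables actually available in the original query. -/
def eraseTo (atoms : A → Finset V) : Plan A V → Plan A V
  | .atom i => .atom i
  | .proj hv P => .proj (hv ∩ hvar atoms (eraseTo atoms P)) (eraseTo atoms P)
  | .join Ps => .join (Ps.attach.map (fun P => eraseTo atoms P.1))
decreasing_by
  all_goals simp_wf
  all_goals try have := List.sizeOf_lt_of_mem P.2
  all_goals omega

/-- The dissociation `Δ^P` corresponding to a plan `P`: for each join operator with join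
variables `JVar = ⋃_j HVar(P_j)`, every relation occurring in subplan `P_j` receives the
variables `JVar ∖ HVar(P_j)`. -/
def dissOf (atoms : A → Finset V) : Plan A V → A → Finset V
  | .atom _ => fun _ => ∅
  | .proj _ P => dissOf atoms P
  | .join Ps => fun i =>
      Ps.attach.foldr (fun P acc =>
        (if i ∈ atomsOf P.1 then
            (joinVars atoms Ps \ hvar atoms P.1) ∪ dissOf atoms P.1 i
          else ∅) ∪ acc) ∅
decreasing_by
  all_goals simp_wf
  all_goals try have := List.sizeOf_lt_of_mem P.2
  all_goals omega

end Plan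

/-- The recursive algorithm `MP` enumerating the minimal query plans of the query with
atom set `S` and head variables `H` (head variables are treated as constants):
* if the query has a single atom, return the projection of that atom onto the head
  variables;
* if the query (after removing the head variables) is disconnected, return any join of
  minimal plans of its connected components (each component keeping the head variables
  occurring in it);
* otherwise, for any minimal cut-set `ys` of the query minus its head variables, return
  the plan projecting `ys` away from any minimal plan of the query with head variables
  `H ∪ ys`. -/
inductive MPrel (atoms : A → Finset V) : Finset A → Finset V → Plan A V → Prop
  | single (i : A) (H : Finset V) : MPrel atoms {i} H (.proj H (.atom i))
  | disc (S : Finset A) (H : Finset V) (parts : List (Finset A)) (Ps : List (Plan A V))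
      (hdup : parts.Nodup) (hlen : 2 ≤ parts.length)
      (hparts : ∀ T : Finset A, T ∈ parts ↔ IsComp (fun i => atoms i \ H) S T)
      (hlen2 : parts.length = Ps.length)
      (hPs : ∀ n : ℕ, ∀ h1 : n < parts.length, ∀ h2 : n < Ps.length,
        MPrel atoms parts[n] (H ∩ (parts[n]).sup atoms) Ps[n]) :
      MPrel atoms S H (.join Ps)
  | conn (S : Finset A) (H : Finset V) (ys : Finset V) (P : Plan A V)
      (hcard : 2 ≤ S.card)
      (hconn : ¬ Disconn (fun i => atoms i \ H) S)
      (hcut : MinCut (fun i => atoms i \ H) S ys)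
      (hP : MPrel atoms S (H ∪ ys) P) :
      MPrel atoms S H (.proj H P)


section AuxHier

variable {A V : Type*} [Fintype A] [Fintype V]

/-- Reachability between atoms via shared variables. -/
def Reach (atoms : A → Finset V) (i j : A) : Prop :=
  Relation.ReflTransGen (fun a b => (atoms a ∩ atoms b).Nonempty) i j

/-- The connected component of atom `i`. -/
def comp (atoms : A → Finset V) (i : A) : Finset A :=
  Finset.univ.filter (Reach atoms i)

lemma mem_comp {atoms : A → Finset V} {i j : A} :
    j ∈ comp atoms i ↔ Reach atoms i j := by simp [comp]

lemma comp_not_disconn (atoms : A → Finset V) (i : A) :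
    ¬ Disconn atoms (comp atoms i) := by
  rintro ⟨T, hTsub, hTne, hCne, hdisj⟩
  by_cases hi : i ∈ T
  · obtain ⟨j, hj⟩ := hCne
    have hjT : ∀ k, Reach atoms i k → k ∈ T := by
      intro k hk
      induction hk with
      | refl => exact hi
      | tail h e ih =>
        rename_i b c
        by_contra hc
        have hcc : c ∈ comp atoms i \ T :=
          Finset.mem_sdiff.mpr ⟨mem_comp.mpr (Relation.ReflTransGen.tail h e), hc⟩
        exact e.ne_empty (hdisj b ih c hcc)
    have := hjT j (mem_comp.mp (Finset.mem_sdiff.mp hj).1)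
    exact (Finset.mem_sdiff.mp hj).2 this
  · obtain ⟨j, hj⟩ := hTne
    have hjT : ∀ k, Reach atoms i k → k ∉ T := by
      intro k hk
      induction hk with
      | refl => exact hi
      | tail h e ih =>
        rename_i b c
        intro hc
        have hbb : b ∈ comp atoms i \ T :=
          Finset.mem_sdiff.mpr ⟨mem_comp.mpr h, ih⟩
        have := hdisj c hc b hbb
        rw [Finset.inter_comm] at this
        exact e.ne_empty this
    exact hjT j (mem_comp.mp (hTsub hj)) hj

lemma comp_isComp (atoms : A → Finset V) (i : A) :
    IsComp atoms Finset.univ (comp atoms i) := by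
  refine ⟨Finset.subset_univ _, ⟨i, mem_comp.mpr Relation.ReflTransGen.refl⟩,
    comp_not_disconn atoms i, ?_⟩
  intro U hTU hUuniv hUconn
  by_contra hne
  obtain ⟨j, hjU, hjc⟩ : ∃ j ∈ U, j ∉ comp atoms i := by
    by_contra hc
    push_neg at hc
    exact hne (Finset.Subset.antisymm hc hTU)
  refine hUconn ⟨comp atoms i, hTU, ⟨i, mem_comp.mpr Relation.ReflTransGen.refl⟩,
    ⟨j, Finset.mem_sdiff.mpr ⟨hjU, hjc⟩⟩, ?_⟩
  intro a ha b hb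
  by_contra hab
  have hab' := Finset.nonempty_iff_ne_empty.mpr hab
  have : b ∈ comp atoms i :=
    mem_comp.mpr (Relation.ReflTransGen.tail (mem_comp.mp ha) hab')
  exact (Finset.mem_sdiff.mp hb).2 this

lemma atOf_subset_comp {atoms : A → Finset V} {i : A} {x : V}
    (hi : i ∈ atOf atoms Finset.univ x) :
    atOf atoms Finset.univ x ⊆ comp atoms i := by
  intro j hj
  simp only [atOf, Finset.mem_filter] at hi hj
  exact mem_comp.mpr (Relation.ReflTransGen.single ⟨x, Finset.mem_inter.mpr ⟨hi.2, hj.2⟩⟩)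

lemma atOf_eq_of_subset {atoms : A → Finset V} {T : Finset A} {x : V}
    (h : atOf atoms Finset.univ x ⊆ T) :
    atOf atoms T x = atOf atoms Finset.univ x := by
  ext j
  simp only [atOf, Finset.mem_filter, Finset.mem_univ, true_and]
  constructor
  · exact fun hj => hj.2
  · intro hj
    exact ⟨h (by simp [atOf, hj]), hj⟩

lemma atOf_restrict (atoms : A → Finset V) (T : Finset A) (x : V) :
    atOf atoms T x = atOf atoms Finset.univ x ∩ T := by
  ext j
  simp only [atOf, Finset.mem_filter, Finset.mem_inter, Finset.mem_univ, true_and]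
  tauto

lemma hierOn_restrict {atoms : A → Finset V} (h : Hier atoms) (T : Finset A) :
    HierOn atoms T ∅ := by
  intro x _ y _
  rcases h x (Finset.notMem_empty x) y (Finset.notMem_empty y) with h1 | h1 | h1
  · left
    rw [atOf_restrict atoms T x, atOf_restrict atoms T y]
    exact Finset.inter_subset_inter h1 le_rfl
  · right; left
    rw [atOf_restrict atoms T x, atOf_restrict atoms T y]
    apply Finset.eq_empty_of_forall_notMem
    intro i hi
    simp only [Finset.mem_inter] at hi
    have : i ∈ atOf atoms Finset.univ x ∩ atOf atoms Finset.univ y :=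
      Finset.mem_inter.mpr ⟨hi.1.1, hi.2.1⟩
    rw [h1] at this
    exact Finset.notMem_empty i this
  · right; right
    rw [atOf_restrict atoms T x, atOf_restrict atoms T y]
    exact Finset.inter_subset_inter h1 le_rfl

end AuxHier

/-- Recursive characterization of hierarchical queries.  A Boolean
self-join-free conjunctive query `q` is hierarchical iff (1) it consists of a single atom,
or (2) it is disconnected (has `k ≥ 2` connected components) and all of its connected
components are hierarchical, or (3) it has a separator variable `x` (an existential
variable occurring in every atom) such that `q − x` is hierarchical. -/
theorem hierarchical_recursive_characterization
    {A V : Type*} [Fintype A] [Fintype V] [Nonempty A] (atoms : A → Finset V) :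
    Hier atoms ↔
      Fintype.card A = 1 ∨
      (Disconn atoms Finset.univ ∧
        ∀ T : Finset A, IsComp atoms Finset.univ T → HierOn atoms T ∅) ∨
      (∃ x : V, (∀ i : A, x ∈ atoms i) ∧ Hier (fun i => atoms i \ {x})) := by
  constructor
  · intro hH
    by_cases h1 : Fintype.card A = 1
    · exact Or.inl h1
    by_cases h3 : ∃ x : V, ∀ i : A, x ∈ atoms i
    · obtain ⟨x, hx⟩ := h3
      refine Or.inr (Or.inr ⟨x, hx, ?_⟩)
      intro y _ z _
      have hxempty : atOf (fun i => atoms i \ {x}) Finset.univ x = ∅ := by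
        apply Finset.eq_empty_of_forall_notMem
        intro j hj
        simp [atOf] at hj
      have e : ∀ w : V, w ≠ x →
          atOf (fun i => atoms i \ {x}) Finset.univ w = atOf atoms Finset.univ w := by
        intro w hw
        ext j
        simp [atOf, hw]
      by_cases hy : y = x
      · subst hy
        right; left
        rw [hxempty, Finset.empty_inter]
      by_cases hz : z = x
      · subst hz
        right; left
        rw [hxempty, Finset.inter_empty]
      · rw [e y hy, e z hz]
        exact hH y (Finset.notMem_empty y) z (Finset.notMem_empty z)
    · refine Or.inr (Or.inl ⟨?_, fun T _ => hierOn_restrict hH T⟩)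
      by_contra hD
      apply h3
      have hA2 : 1 < Fintype.card A := by
        have := Fintype.card_pos (α := A); omega
      obtain ⟨i₀⟩ := ‹Nonempty A›
      have hstep : ∀ T : Finset A, T.Nonempty → ((Finset.univ : Finset A) \ T).Nonempty →
          ∃ a ∈ T, ∃ b ∈ (Finset.univ : Finset A) \ T, (atoms a ∩ atoms b).Nonempty := by
        intro T hT hCT
        by_contra hc
        push_neg at hc
        exact hD ⟨T, Finset.subset_univ T, hT, hCT, fun a ha b hb =>
          hc a ha b hb⟩
      have hcne : ((Finset.univ : Finset A) \ {i₀}).Nonempty := by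
        rw [Finset.sdiff_nonempty]
        intro hsub
        have := Finset.card_le_card hsub
        simp [Finset.card_univ] at this
        omega
      obtain ⟨a, ha, b, hb, y₀, hy₀⟩ :=
        hstep {i₀} ⟨i₀, Finset.mem_singleton_self i₀⟩ hcne
      obtain ⟨x, -, hxmax⟩ := Finset.exists_max_image (Finset.univ : Finset V)
        (fun v => (atOf atoms Finset.univ v).card) ⟨y₀, Finset.mem_univ y₀⟩
      refine ⟨x, fun i => ?_⟩
      by_contra hxi
      have hxne : (atOf atoms Finset.univ x).Nonempty := by
        have hmem : a ∈ atOf atoms Finset.univ y₀ := by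
          simp only [atOf, Finset.mem_filter, Finset.mem_univ, true_and]
          exact (Finset.mem_inter.mp hy₀).1
        have hcard := hxmax y₀ (Finset.mem_univ _)
        have hpos : 0 < (atOf atoms Finset.univ y₀).card := Finset.card_pos.mpr ⟨a, hmem⟩
        exact Finset.card_pos.mp (by omega)
      have hCne : ((Finset.univ : Finset A) \ atOf atoms Finset.univ x).Nonempty :=
        ⟨i, by simp [atOf, hxi]⟩
      obtain ⟨c, hc, d, hd, y, hy⟩ := hstep _ hxne hCne
      have hyc : c ∈ atOf atoms Finset.univ y := by
        simp only [atOf, Finset.mem_filter, Finset.mem_univ, true_and]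
        exact (Finset.mem_inter.mp hy).1
      have hyd : d ∈ atOf atoms Finset.univ y := by
        simp only [atOf, Finset.mem_filter, Finset.mem_univ, true_and]
        exact (Finset.mem_inter.mp hy).2
      have hdnx : d ∉ atOf atoms Finset.univ x := (Finset.mem_sdiff.mp hd).2
      rcases hH x (Finset.notMem_empty x) y (Finset.notMem_empty y) with
        hsub | hdisj | hsub
      · have heq := Finset.eq_of_subset_of_card_le hsub (hxmax y (Finset.mem_univ _))
        rw [← heq] at hyd
        exact hdnx hyd
      · have : c ∈ atOf atoms Finset.univ x ∩ atOf atoms Finset.univ y :=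
          Finset.mem_inter.mpr ⟨hc, hyc⟩
        rw [hdisj] at this
        exact Finset.notMem_empty c this
      · exact hdnx (hsub hyd)
  · rintro (h1 | ⟨hD, hcomp⟩ | ⟨x, hx, hrec⟩)
    · intro y _ z _
      obtain ⟨i, hi⟩ := Fintype.card_eq_one_iff.mp h1
      by_cases hz : z ∈ atoms i
      · left
        intro j hj
        simp only [atOf, Finset.mem_filter, Finset.mem_univ, true_and] at *
        rw [hi j]
        exact hz
      · right; right
        intro j hj
        simp only [atOf, Finset.mem_filter, Finset.mem_univ, true_and] at hj ⊢
        rw [hi j] at hj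
        exact absurd hj hz
    · intro y _ z _
      by_cases hint : atOf atoms Finset.univ y ∩ atOf atoms Finset.univ z = ∅
      · right; left
        exact hint
      · obtain ⟨k, hk⟩ := Finset.nonempty_iff_ne_empty.mpr hint
        have hky := (Finset.mem_inter.mp hk).1
        have hkz := (Finset.mem_inter.mp hk).2
        have h1 : atOf atoms Finset.univ y ⊆ comp atoms k := atOf_subset_comp hky
        have h2 : atOf atoms Finset.univ z ⊆ comp atoms k := atOf_subset_comp hkz
        have hh := hcomp (comp atoms k) (comp_isComp atoms k) y
          (Finset.notMem_empty y) z (Finset.notMem_empty z)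
        rw [atOf_eq_of_subset h1, atOf_eq_of_subset h2] at hh
        exact hh
    · intro y _ z _
      have hxuniv : ∀ w : V, atOf atoms Finset.univ w ⊆ atOf atoms Finset.univ x := by
        intro w j hj
        simp only [atOf, Finset.mem_filter, Finset.mem_univ, true_and]
        exact hx j
      have e : ∀ w : V, w ≠ x →
          atOf (fun i => atoms i \ {x}) Finset.univ w = atOf atoms Finset.univ w := by
        intro w hw
        ext j
        simp [atOf, hw]
      by_cases hy : y = x
      · subst hy
        right; right
        exact hxuniv z
      by_cases hz : z = x
      · subst hz
        left
        exact hxuniv y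
      · rw [← e y hy, ← e z hz]
        exact hrec y (Finset.notMem_empty y) z (Finset.notMem_empty z)

end

end PDB
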